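/- Let V = C([0,1]) and P(t) = [[1, e^{2πit}],[e^{-2πit}, 1]]. Then for every r > 0, r·e_2 + P ∈ D_2^max(V). Consequently the order unit e = 1 is not an Archimedean matrix order unit for the matrix ordering D^max(V). -/

import Mathlib

open scoped ComplexOrder
open Finset

noncomputable section

section Defs
variable {V : Type*} [AddCommGroup V] [Module ℂ V]

/-- The elementary tensor `a ⊗ v` in `M_n(V) ≅ M_n(ℂ) ⊗ V`. -/
def eTensor {n : ℕ} (a : Matrix (Fin n) (Fin n) ℂ) (v : V) : Matrix (Fin n) (Fin n) V :=
  Matrix.of fun p q => a p q • v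

/-- The conjugation `X* A X` of `A ∈ M_n(V)` by a scalar matrix `X ∈ M_{n,m}(ℂ)`. -/
def mconj {n m : ℕ} (X : Matrix (Fin n) (Fin m) ℂ) (A : Matrix (Fin n) (Fin n) V) :
    Matrix (Fin m) (Fin m) V :=
  Matrix.of fun i j => ∑ k, ∑ l, (star (X k i) * X l j) • A k l

/-- The diagonal matrix `e_n` with `e` in each diagonal entry. -/
def eMat (e : V) (n : ℕ) : Matrix (Fin n) (Fin n) V :=
  Matrix.of fun i j => if i = j then e else 0

/-- The minimal cone `C_n^min(V)`. -/
def Cmin (pos : Set V) (n : ℕ) : Set (Matrix (Fin n) (Fin n) V) :=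
  {M | ∀ lam : Fin n → ℂ, (∑ i, ∑ j, (star (lam i) * lam j) • M i j) ∈ pos}

/-- The cone `D_n^max(V)` of sums of tensors `a ⊗ v` with `a ∈ M_n⁺`, `v ∈ V⁺`. -/
def Dmax (pos : Set V) (n : ℕ) : Set (Matrix (Fin n) (Fin n) V) :=
  {M | ∃ (k : ℕ) (a : Fin k → Matrix (Fin n) (Fin n) ℂ) (v : Fin k → V),
    (∀ i, (a i).PosSemidef) ∧ (∀ i, v i ∈ pos) ∧ M = ∑ i, eTensor (a i) (v i)}

/-- The maximal cone `C_n^max(V)`: the Archimedeanization of `D_n^max(V)`. -/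
def Cmax (pos : Set V) (e : V) (n : ℕ) : Set (Matrix (Fin n) (Fin n) V) :=
  {M | ∀ r : ℝ, 0 < r → (r : ℂ) • eMat e n + M ∈ Dmax pos n}

end Defs

section StarDefs
variable {V : Type*} [AddCommGroup V] [Module ℂ V] [StarAddMonoid V] [StarModule ℂ V]

/-- `(V, pos)` is an ordered `*`-vector space. -/
def IsOrderedStar (pos : Set V) : Prop :=
  (∀ v ∈ pos, star v = v) ∧
  (∀ r : ℝ, 0 ≤ r → ∀ v ∈ pos, (r : ℂ) • v ∈ pos) ∧
  (∀ v ∈ pos, ∀ w ∈ pos, v + w ∈ pos) ∧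
  (∀ v ∈ pos, -v ∈ pos → v = 0)

/-- `(V, pos, e)` is an Archimedean order unit (AOU) space. -/
def IsAOU (pos : Set V) (e : V) : Prop :=
  IsOrderedStar pos ∧ star e = e ∧
  (∀ v : V, star v = v → ∃ r : ℝ, 0 < r ∧ (r : ℂ) • e - v ∈ pos) ∧
  (∀ v : V, (∀ r : ℝ, 0 < r → (r : ℂ) • e + v ∈ pos) → v ∈ pos)

/-- A state on `(V, pos, e)`: a unital positive linear functional. -/
def IsState (pos : Set V) (e : V) (s : V →ₗ[ℂ] ℂ) : Prop :=
  s e = 1 ∧ ∀ v ∈ pos, 0 ≤ s v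

/-- A positive linear functional. -/
def IsPosFunc (pos : Set V) (f : V →ₗ[ℂ] ℂ) : Prop := ∀ v ∈ pos, 0 ≤ f v

/-- A matrix ordering on the `*`-vector space `V`. -/
def IsMatrixOrdering (C : ∀ n : ℕ, Set (Matrix (Fin n) (Fin n) V)) : Prop :=
  (∀ (n : ℕ) (M : Matrix (Fin n) (Fin n) V), M ∈ C n → star M = M) ∧
  (∀ (n : ℕ) (r : ℝ), 0 ≤ r → ∀ M ∈ C n, (r : ℂ) • M ∈ C n) ∧
  (∀ n : ℕ, ∀ M ∈ C n, ∀ N ∈ C n, M + N ∈ C n) ∧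
  (∀ n : ℕ, ∀ M ∈ C n, -M ∈ C n → M = 0) ∧
  (∀ (n m : ℕ) (X : Matrix (Fin n) (Fin m) ℂ), ∀ M ∈ C n, mconj X M ∈ C m)

/-- `e` is a matrix order unit for the family `C`. -/
def IsMatrixOrderUnit (C : ∀ n : ℕ, Set (Matrix (Fin n) (Fin n) V)) (e : V) : Prop :=
  star e = e ∧
  ∀ (n : ℕ) (M : Matrix (Fin n) (Fin n) V), star M = M →
    ∃ r : ℝ, 0 < r ∧ (r : ℂ) • eMat e n - M ∈ C n

/-- `e` is an Archimedean matrix order unit for the family `C`. -/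
def IsArchMatrixOrderUnit (C : ∀ n : ℕ, Set (Matrix (Fin n) (Fin n) V)) (e : V) : Prop :=
  IsMatrixOrderUnit C e ∧
  ∀ (n : ℕ) (M : Matrix (Fin n) (Fin n) V),
    (∀ r : ℝ, 0 < r → (r : ℂ) • eMat e n + M ∈ C n) → M ∈ C n

/-- `(V, C, e)` is an (abstract) operator system. -/
def IsOperatorSystem (C : ∀ n : ℕ, Set (Matrix (Fin n) (Fin n) V)) (e : V) : Prop :=
  IsMatrixOrdering C ∧ IsArchMatrixOrderUnit C e

/-- The ground-level cone of a matrix ordering, under `M_1(V) ≅ V`. -/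
def groundPos (C : ∀ n : ℕ, Set (Matrix (Fin n) (Fin n) V)) : Set V :=
  {v | (Matrix.of fun _ _ : Fin 1 => v) ∈ C 1}

/-- An operator system structure on the AOU space `(V, pos, e)`. -/
def IsOpSysStructure (pos : Set V) (e : V) (C : ∀ n : ℕ, Set (Matrix (Fin n) (Fin n) V)) :
    Prop :=
  IsOperatorSystem C e ∧ C 1 = {M | M 0 0 ∈ pos}

end StarDefs

section DualDefs
variable {V : Type*} [AddCommGroup V] [Module ℂ V] [StarAddMonoid V] [StarModule ℂ V]

/-- The adjoint functional `f*` with `f*(v) = conj (f (v*))`. -/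
def starFunc (f : V →ₗ[ℂ] ℂ) : V →ₗ[ℂ] ℂ where
  toFun v := star (f (star v))
  map_add' v w := by simp
  map_smul' c v := by simp [star_smul, map_smul, mul_comm]

/-- The pairing between a matrix of functionals and a matrix over `V`:
`(f_{ij})((v_{ij})) = ∑_{ij} f_{ij}(v_{ij})`. -/
def dPair {n : ℕ} (F : Matrix (Fin n) (Fin n) (V →ₗ[ℂ] ℂ))
    (A : Matrix (Fin n) (Fin n) V) : ℂ :=
  ∑ i, ∑ j, F i j (A i j)

/-- The dual cones `P_n^d` of a matrix ordering on `V`. -/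
def dualCones (P : ∀ n : ℕ, Set (Matrix (Fin n) (Fin n) V)) (n : ℕ) :
    Set (Matrix (Fin n) (Fin n) (V →ₗ[ℂ] ℂ)) :=
  {F | ∀ A ∈ P n, 0 ≤ dPair F A}

/-- The predual cones `^dQ_n` of a matrix ordering on `V'`. -/
def preCones (Q : ∀ n : ℕ, Set (Matrix (Fin n) (Fin n) (V →ₗ[ℂ] ℂ))) (n : ℕ) :
    Set (Matrix (Fin n) (Fin n) V) :=
  {A | ∀ F ∈ Q n, 0 ≤ dPair F A}

/-- A matrix ordering on the dual space `V'` (hermitian via `starFunc`,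
compatibility under conjugation by scalar matrices). -/
def IsDualMatrixOrdering (Q : ∀ n : ℕ, Set (Matrix (Fin n) (Fin n) (V →ₗ[ℂ] ℂ))) : Prop :=
  (∀ (n : ℕ) (F : Matrix (Fin n) (Fin n) (V →ₗ[ℂ] ℂ)), F ∈ Q n →
    ∀ i j, F i j = starFunc (F j i)) ∧
  (∀ (n : ℕ) (r : ℝ), 0 ≤ r → ∀ F ∈ Q n, (r : ℂ) • F ∈ Q n) ∧
  (∀ n : ℕ, ∀ F ∈ Q n, ∀ G ∈ Q n, F + G ∈ Q n) ∧
  (∀ n : ℕ, ∀ F ∈ Q n, -F ∈ Q n → F = 0) ∧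
  (∀ (n m : ℕ) (X : Matrix (Fin n) (Fin m) ℂ), ∀ F ∈ Q n, mconj X F ∈ Q m)

/-- Weak*-closedness of a set of matrices of functionals: closedness in the topology
induced by the pairing against all of `M_n(V)`, with the topology of pointwise convergence. -/
def WeakStarClosed {n : ℕ} (Q : Set (Matrix (Fin n) (Fin n) (V →ₗ[ℂ] ℂ))) : Prop :=
  @IsClosed _ (TopologicalSpace.induced
    (fun F : Matrix (Fin n) (Fin n) (V →ₗ[ℂ] ℂ) => fun A => dPair F A)
    Pi.topologicalSpace) Q

/-- The minimal norm on an AOU space: `‖v‖_m = sup { |s(v)| : s a state }`. -/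
def minNorm (pos : Set V) (e : V) (v : V) : ℝ :=
  ⨆ s : {s : V →ₗ[ℂ] ℂ // IsState pos e s}, ‖s.1 v‖

/-- Bounded (continuous) linear functionals on `V`. -/
def IsBddFunc (pos : Set V) (e : V) (f : V →ₗ[ℂ] ℂ) : Prop :=
  ∃ c : ℝ, ∀ v, ‖f v‖ ≤ c * minNorm pos e v

end DualDefs

end

/-- The positive cone of `C([0,1])`. -/
def posC01 : Set C(Set.Icc (0:ℝ) 1, ℂ) := {f | ∀ t, 0 ≤ f t}

/-- The function `t ↦ e^{2πit}` in `C([0,1])`. -/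
noncomputable def expMap : C(Set.Icc (0:ℝ) 1, ℂ) :=
  ⟨fun t => Complex.exp (2 * Real.pi * Complex.I * ((t : ℝ) : ℂ)), by fun_prop⟩

/-- The matrix `P(t) = [[1, e^{2πit}], [e^{-2πit}, 1]] ∈ M_2(C([0,1]))`. -/
noncomputable def Pmat : Matrix (Fin 2) (Fin 2) C(Set.Icc (0:ℝ) 1, ℂ) :=
  !![1, expMap; star expMap, 1]


section Helpers

set_option maxHeartbeats 1000000
set_option synthInstance.maxHeartbeats 400000


noncomputable def Efun (x : ℝ) : ℂ := Complex.exp (2 * Real.pi * Complex.I * x)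

lemma Efun_add (x y : ℝ) : Efun (x + y) = Efun x * Efun y := by
  rw [Efun, Efun, Efun, ← Complex.exp_add]
  congr 1; push_cast; ring

lemma Efun_zero : Efun 0 = 1 := by simp [Efun]

lemma Efun_ne_zero (x : ℝ) : Efun x ≠ 0 := Complex.exp_ne_zero _

lemma Efun_mul_neg (x : ℝ) : Efun x * Efun (-x) = 1 := by
  rw [← Efun_add]; simp [Efun_zero]

lemma conj_Efun (x : ℝ) : (starRingEnd ℂ) (Efun x) = Efun (-x) := by
  rw [Efun, ← Complex.exp_conj]
  congr 1
  simp only [map_mul, Complex.conj_I, Complex.conj_ofReal, map_ofNat]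
  push_cast; ring

lemma Efun_int (n : ℤ) : Efun n = 1 := by
  rw [Efun, show 2 * (Real.pi:ℂ) * Complex.I * (n:ℝ) = (n:ℤ) * (2 * Real.pi * Complex.I) by push_cast; ring]
  exact Complex.exp_int_mul_two_pi_mul_I n

lemma Efun_eq_one_iff (x : ℝ) : Efun x = 1 ↔ ∃ n : ℤ, x = n := by
  constructor
  · intro h
    rw [Efun, Complex.exp_eq_one_iff] at h
    obtain ⟨n, hn⟩ := h
    refine ⟨n, ?_⟩
    have h2 : (2 * (Real.pi:ℂ) * Complex.I) ≠ 0 := by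
      simp [Real.pi_ne_zero, Complex.I_ne_zero]
    have : (x:ℂ) = n := mul_left_cancel₀ h2 (by linear_combination hn)
    exact_mod_cast this
  · rintro ⟨n, rfl⟩; exact Efun_int n

lemma Efun_nat_mul (n : ℕ) (x : ℝ) : Efun (n * x) = (Efun x) ^ n := by
  rw [Efun, Efun, ← Complex.exp_nat_mul]
  congr 1; push_cast; ring

lemma Efun_inj {a b : ℝ} (hne : a ≠ b) (h : |a - b| < 1) : Efun a ≠ Efun b := by
  intro he
  have h1 : Efun (a - b) = 1 := by
    have : Efun (a + -b) = Efun (b + -b) := by rw [Efun_add, Efun_add, he]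
    rw [show b + -b = (0:ℝ) by ring, Efun_zero, show a + -b = a - b by ring] at this
    exact this
  obtain ⟨n, hn⟩ := (Efun_eq_one_iff _).mp h1
  have hn0 : n = 0 := by
    have h' : |(n:ℝ)| < 1 := by rwa [hn] at h
    have : |n| < 1 := by exact_mod_cast (by rwa [← Int.cast_abs] at h' : ((|n|:ℤ):ℝ) < 1)
    exact Int.abs_lt_one_iff.mp this
  apply hne
  rw [hn0] at hn; push_cast at hn; linarith

lemma sum_Efun (N : ℕ) (hN : 0 < N) (j : ℤ) :
    ∑ k ∈ Finset.range N, Efun ((j:ℝ) * k / N) = if (N:ℤ) ∣ j then (N:ℂ) else 0 := by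
  have hterm : ∀ k : ℕ, Efun ((j:ℝ) * k / N) = (Efun ((j:ℝ)/N)) ^ k := by
    intro k
    rw [← Efun_nat_mul]
    congr 1; field_simp
  simp only [hterm]
  have hxN : (Efun ((j:ℝ)/N)) ^ N = 1 := by
    rw [← Efun_nat_mul, show (N:ℝ) * ((j:ℝ)/N) = (j:ℝ) by field_simp, Efun_int]
  by_cases hx : Efun ((j:ℝ)/N) = 1
  · obtain ⟨n, hn⟩ := (Efun_eq_one_iff _).mp hx
    have hdvd : (N:ℤ) ∣ j := ⟨n, by
      have : (j:ℝ) = (N:ℝ) * n := by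
        field_simp at hn; linarith [hn]
      exact_mod_cast this⟩
    simp [hx, hdvd]
  · have hnd : ¬ (N:ℤ) ∣ j := by
      rintro ⟨c, rfl⟩
      apply hx
      rw [show ((N*c:ℤ):ℝ)/N = (c:ℝ) by push_cast; field_simp, Efun_int]
    rw [geom_sum_eq hx, hxN]
    simp [hnd]

lemma continuous_Efun : Continuous Efun := by
  unfold Efun; fun_prop

lemma not_dvd_small {N : ℕ} {j : ℤ} (hj : j ≠ 0) (habs : |j| < N) : ¬ (N:ℤ) ∣ j := by
  intro hdvd
  have h1 : (N:ℤ) ≤ |j| := Int.le_of_dvd (abs_pos.mpr hj) ((dvd_abs _ _).mpr hdvd)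
  linarith

lemma posSemidef_Efun (x : ℝ) : Matrix.PosSemidef !![1, Efun x; Efun (-x), 1] := by
  rw [Matrix.posSemidef_iff_dotProduct_mulVec]
  constructor
  · ext i j
    fin_cases i <;> fin_cases j <;>
      simp [Matrix.conjTranspose_apply, Complex.star_def, conj_Efun, neg_neg]
  · intro w
    have heq : dotProduct (star w) ((!![1, Efun x; Efun (-x), 1]).mulVec w)
        = star (w 0 + Efun x * w 1) * (w 0 + Efun x * w 1) := by
      simp only [dotProduct, Matrix.mulVec, Fin.sum_univ_two, Pi.star_apply,
        Matrix.cons_val', Matrix.cons_val_zero, Matrix.cons_val_one, Matrix.head_cons,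
        Matrix.head_fin_const, Matrix.empty_val', Matrix.cons_val_fin_one, Matrix.of_apply,
        Complex.star_def, map_add, map_mul, conj_Efun]
      linear_combination (-((starRingEnd ℂ) (w 1) * w 1)) * Efun_mul_neg x
    rw [heq]
    exact star_mul_self_nonneg _

lemma part1 (r : ℝ) (hr : 0 < r) :
    (r : ℂ) • eMat (1 : C(Set.Icc (0:ℝ) 1, ℂ)) 2 + Pmat ∈ Dmax posC01 2 := by
  set d : ℕ := max 1 ⌈1/r⌉₊ with hd
  have hd1 : 1 ≤ d := le_max_left _ _
  have hdpos : (0:ℝ) < d := by exact_mod_cast hd1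
  set N : ℕ := d + 2 with hNdef
  have hNpos : 0 < N := by omega
  have hN0 : (0:ℝ) < N := by exact_mod_cast hNpos
  have hrd : 1/(d:ℝ) ≤ r := by
    have h1 : 1/r ≤ (d:ℝ) := by
      calc 1/r ≤ (⌈1/r⌉₊ : ℝ) := Nat.le_ceil _
      _ ≤ (d:ℝ) := by exact_mod_cast le_max_right 1 ⌈1/r⌉₊
    rw [div_le_iff₀ hdpos]
    rw [div_le_iff₀ hr] at h1
    linarith
  -- the data
  set S : ℕ → Set.Icc (0:ℝ) 1 → ℂ :=
    fun k t => ∑ m ∈ Finset.range (d+1), Efun (m * ((k:ℝ)/N - (t:ℝ))) with hS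
  have hScont : ∀ k, Continuous (S k) := fun k =>
    continuous_finset_sum _ fun m _ => continuous_Efun.comp (by fun_prop)
  set c1 : ℝ := 1/((d:ℝ)*N) with hc1def
  set c2 : ℝ := (r - 1/(d:ℝ))/N with hc2def
  have hc1 : 0 ≤ c1 := by positivity
  have hc2 : 0 ≤ c2 := by
    apply div_nonneg _ hN0.le
    linarith
  set pf : ℕ → C(Set.Icc (0:ℝ) 1, ℂ) :=
    fun k => ⟨fun t => (c1:ℂ) * ((starRingEnd ℂ) (S k t) * S k t) + (c2:ℂ),
      (continuous_const.mul ((Complex.continuous_conj.comp (hScont k)).mul (hScont k))).add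
        continuous_const⟩ with hpf
  set A : ℕ → Matrix (Fin 2) (Fin 2) ℂ :=
    fun k => !![1, Efun ((k:ℝ)/N); Efun (-((k:ℝ)/N)), 1] with hA
  -- expansion of |S|^2
  have hexp : ∀ (k : ℕ) (t : Set.Icc (0:ℝ) 1), (starRingEnd ℂ) (S k t) * S k t
      = ∑ m' ∈ range (d+1), ∑ m ∈ range (d+1),
          Efun (((((m:ℤ) - (m':ℤ)):ℤ):ℝ) * k / N) * Efun (((m':ℝ) - (m:ℝ)) * (t:ℝ)) := by
    intro k t
    rw [hS]
    simp only
    rw [map_sum, Finset.sum_mul_sum]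
    refine Finset.sum_congr rfl fun m' _ => Finset.sum_congr rfl fun m _ => ?_
    rw [conj_Efun, ← Efun_add, ← Efun_add]
    congr 1
    push_cast
    field_simp
    ring
  -- diagonal sum
  have hq0 : ∀ t : Set.Icc (0:ℝ) 1,
      ∑ k ∈ range N, (starRingEnd ℂ) (S k t) * S k t = (N:ℂ) * ((d:ℂ)+1) := by
    intro t
    calc ∑ k ∈ range N, (starRingEnd ℂ) (S k t) * S k t
        = ∑ k ∈ range N, ∑ m' ∈ range (d+1), ∑ m ∈ range (d+1),
            Efun (((((m:ℤ) - (m':ℤ)):ℤ):ℝ) * k / N) * Efun (((m':ℝ) - (m:ℝ)) * (t:ℝ)) :=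
          Finset.sum_congr rfl fun k _ => hexp k t
      _ = ∑ m' ∈ range (d+1), ∑ m ∈ range (d+1), ∑ k ∈ range N,
            Efun (((((m:ℤ) - (m':ℤ)):ℤ):ℝ) * k / N) * Efun (((m':ℝ) - (m:ℝ)) * (t:ℝ)) := by
          rw [Finset.sum_comm]
          exact Finset.sum_congr rfl fun m' _ => Finset.sum_comm
      _ = ∑ m' ∈ range (d+1), ∑ m ∈ range (d+1),
            (if ((N:ℤ) ∣ ((m:ℤ) - (m':ℤ))) then (N:ℂ) else 0) * Efun (((m':ℝ) - (m:ℝ)) * (t:ℝ)) := by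
          refine Finset.sum_congr rfl fun m' _ => Finset.sum_congr rfl fun m _ => ?_
          rw [← Finset.sum_mul, sum_Efun N hNpos ((m:ℤ) - (m':ℤ))]
      _ = ∑ m' ∈ range (d+1), ∑ m ∈ range (d+1), (if m = m' then (N:ℂ) else 0) := by
          refine Finset.sum_congr rfl fun m' hm' => Finset.sum_congr rfl fun m hm => ?_
          rw [Finset.mem_range] at hm hm'
          by_cases hmm : m = m'
          · subst hmm
            simp [Efun_zero]
          · rw [if_neg hmm, if_neg, zero_mul]
            apply not_dvd_small
            · omega
            · rw [abs_lt]
              constructor <;> omega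
      _ = ∑ m' ∈ range (d+1), (N:ℂ) := by
          refine Finset.sum_congr rfl fun m' hm' => ?_
          rw [Finset.sum_ite_eq' (range (d+1)) m' (fun _ => (N:ℂ)), if_pos hm']
      _ = (N:ℂ) * ((d:ℂ)+1) := by
          rw [Finset.sum_const, Finset.card_range]
          push_cast
          ring
  -- off-diagonal sum
  have hq1 : ∀ t : Set.Icc (0:ℝ) 1,
      ∑ k ∈ range N, Efun ((k:ℝ)/N) * ((starRingEnd ℂ) (S k t) * S k t)
        = (N:ℂ) * (d:ℂ) * Efun (t:ℝ) := by
    intro t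
    calc ∑ k ∈ range N, Efun ((k:ℝ)/N) * ((starRingEnd ℂ) (S k t) * S k t)
        = ∑ k ∈ range N, ∑ m' ∈ range (d+1), ∑ m ∈ range (d+1),
            Efun (((((m:ℤ) - (m':ℤ) + 1):ℤ):ℝ) * k / N) * Efun (((m':ℝ) - (m:ℝ)) * (t:ℝ)) := by
          refine Finset.sum_congr rfl fun k _ => ?_
          rw [hexp k t, Finset.mul_sum]
          refine Finset.sum_congr rfl fun m' _ => ?_
          rw [Finset.mul_sum]
          refine Finset.sum_congr rfl fun m _ => ?_
          rw [← mul_assoc, ← Efun_add]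
          congr 2
          push_cast
          field_simp
          ring
      _ = ∑ m' ∈ range (d+1), ∑ m ∈ range (d+1), ∑ k ∈ range N,
            Efun (((((m:ℤ) - (m':ℤ) + 1):ℤ):ℝ) * k / N) * Efun (((m':ℝ) - (m:ℝ)) * (t:ℝ)) := by
          rw [Finset.sum_comm]
          exact Finset.sum_congr rfl fun m' _ => Finset.sum_comm
      _ = ∑ m' ∈ range (d+1), ∑ m ∈ range (d+1),
            (if m' = m + 1 then (N:ℂ) * Efun (((m':ℝ) - (m:ℝ)) * (t:ℝ)) else 0) := by
          refine Finset.sum_congr rfl fun m' hm' => Finset.sum_congr rfl fun m hm => ?_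
          rw [Finset.mem_range] at hm hm'
          rw [← Finset.sum_mul, sum_Efun N hNpos ((m:ℤ) - (m':ℤ) + 1)]
          by_cases hmm : m' = m + 1
          · rw [if_pos hmm,
              if_pos (by rw [(by omega : (m:ℤ) - (m':ℤ) + 1 = 0)]; exact dvd_zero _)]
          · rw [if_neg hmm, if_neg, zero_mul]
            apply not_dvd_small
            · omega
            · rw [abs_lt]
              constructor <;> omega
      _ = ∑ m ∈ range (d+1), ∑ m' ∈ range (d+1),
            (if m' = m + 1 then (N:ℂ) * Efun (((m':ℝ) - (m:ℝ)) * (t:ℝ)) else 0) :=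
          Finset.sum_comm
      _ = ∑ m ∈ range (d+1), (if m + 1 ∈ range (d+1) then (N:ℂ) * Efun ((((m:ℕ)+1:ℝ) - (m:ℝ)) * (t:ℝ)) else 0) := by
          refine Finset.sum_congr rfl fun m hm => ?_
          rw [Finset.sum_ite_eq' (range (d+1)) (m+1)
            (fun m' => (N:ℂ) * Efun (((m':ℝ) - (m:ℝ)) * (t:ℝ)))]
          congr 2
          push_cast
          ring
      _ = ∑ m ∈ range d, (N:ℂ) * Efun (t:ℝ) := by
          rw [Finset.sum_range_succ, if_neg (by simp)]
          rw [add_zero]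
          refine Finset.sum_congr rfl fun m hm => ?_
          rw [Finset.mem_range] at hm
          rw [if_pos (Finset.mem_range.mpr (by omega))]
          congr 1
          rw [show (((m:ℕ)+1:ℝ) - (m:ℝ)) * (t:ℝ) = (t:ℝ) by push_cast; ring]
      _ = (N:ℂ) * (d:ℂ) * Efun (t:ℝ) := by
          rw [Finset.sum_const, Finset.card_range, nsmul_eq_mul]
          ring
  -- geometric sum
  have hgeo : ∑ k ∈ range N, Efun ((k:ℝ)/N) = 0 := by
    have h1 : ∑ k ∈ range N, Efun (((1:ℤ):ℝ) * k / N) = 0 := by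
      rw [sum_Efun N hNpos 1, if_neg]
      intro hdvd
      have := Int.le_of_dvd one_pos hdvd
      have hN2 : (2:ℤ) ≤ (N:ℤ) := by exact_mod_cast (by omega : 2 ≤ N)
      linarith
    rw [← h1]
    exact Finset.sum_congr rfl fun k _ => by norm_num
  -- the three scalar sums
  have hp_sum : ∀ t : Set.Icc (0:ℝ) 1, ∑ k ∈ range N, pf k t = 1 + (r:ℂ) := by
    intro t
    rw [hpf]
    simp only [ContinuousMap.coe_mk]
    rw [Finset.sum_add_distrib, ← Finset.mul_sum, hq0 t, Finset.sum_const, Finset.card_range,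
      nsmul_eq_mul]
    have hreal : c1 * ((N:ℝ) * ((d:ℝ)+1)) + (N:ℝ) * c2 = 1 + r := by
      rw [hc1def, hc2def]
      field_simp
      ring
    calc (c1:ℂ) * ((N:ℂ) * ((d:ℂ)+1)) + (N:ℂ) * (c2:ℂ)
        = ((c1 * ((N:ℝ) * ((d:ℝ)+1)) + (N:ℝ) * c2 : ℝ) : ℂ) := by push_cast; ring
      _ = ((1 + r : ℝ) : ℂ) := by rw [hreal]
      _ = 1 + (r:ℂ) := by push_cast; ring
  have hpz_sum : ∀ t : Set.Icc (0:ℝ) 1,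
      ∑ k ∈ range N, Efun ((k:ℝ)/N) * pf k t = Efun (t:ℝ) := by
    intro t
    rw [hpf]
    simp only [ContinuousMap.coe_mk]
    have step : ∀ k : ℕ, Efun ((k:ℝ)/N) * ((c1:ℂ) * ((starRingEnd ℂ) (S k t) * S k t) + (c2:ℂ))
        = (c1:ℂ) * (Efun ((k:ℝ)/N) * ((starRingEnd ℂ) (S k t) * S k t)) + (c2:ℂ) * Efun ((k:ℝ)/N) := by
      intro k; ring
    rw [Finset.sum_congr rfl fun k _ => step k, Finset.sum_add_distrib, ← Finset.mul_sum,
      ← Finset.mul_sum, hq1 t, hgeo, mul_zero, add_zero]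
    have hreal : c1 * ((N:ℝ) * (d:ℝ)) = 1 := by
      rw [hc1def]
      field_simp
    calc (c1:ℂ) * ((N:ℂ) * (d:ℂ) * Efun (t:ℝ)) = ((c1 * ((N:ℝ)*(d:ℝ)) : ℝ) : ℂ) * Efun (t:ℝ) := by
          push_cast; ring
      _ = Efun (t:ℝ) := by rw [hreal]; push_cast; ring
  have hpfr : ∀ (k : ℕ) (t : Set.Icc (0:ℝ) 1), (starRingEnd ℂ) (pf k t) = pf k t := by
    intro k t
    rw [hpf]
    simp only [ContinuousMap.coe_mk]
    rw [map_add, map_mul, map_mul, Complex.conj_conj, Complex.conj_ofReal,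
      Complex.conj_ofReal]
    ring
  have hpzc_sum : ∀ t : Set.Icc (0:ℝ) 1,
      ∑ k ∈ range N, Efun (-((k:ℝ)/N)) * pf k t = Efun (-(t:ℝ)) := by
    intro t
    have := congrArg (starRingEnd ℂ) (hpz_sum t)
    rw [map_sum, conj_Efun] at this
    rw [← this]
    exact Finset.sum_congr rfl fun k _ => by rw [map_mul, conj_Efun, hpfr]
  have hP00 : Pmat 0 0 = (1 : C(Set.Icc (0:ℝ) 1, ℂ)) := by simp [Pmat]
  have hP11 : Pmat 1 1 = (1 : C(Set.Icc (0:ℝ) 1, ℂ)) := by simp [Pmat]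
  have hP01 : ∀ t : Set.Icc (0:ℝ) 1, Pmat 0 1 t = Efun t := by
    intro t; simp [Pmat, expMap, Efun]
  have hP10 : ∀ t : Set.Icc (0:ℝ) 1, Pmat 1 0 t = Efun (-(t:ℝ)) := by
    intro t
    rw [show (Pmat 1 0) = star expMap by rw [Pmat]; simp]
    rw [ContinuousMap.star_apply]
    rw [show star (expMap t) = (starRingEnd ℂ) (expMap t) from rfl,
      show expMap t = Efun (t:ℝ) from rfl, conj_Efun]
  have hLHS : ∀ (p q : Fin 2) (t : Set.Icc (0:ℝ) 1),
      ((r:ℂ) • eMat (1 : C(Set.Icc (0:ℝ) 1, ℂ)) 2 + Pmat) p q t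
        = (if p = q then (r:ℂ) else 0) + Pmat p q t := by
    intro p q t
    rw [Matrix.add_apply, Matrix.smul_apply, ContinuousMap.add_apply]
    congr 1
    rw [eMat]
    simp only [Matrix.of_apply]
    split
    · rw [ContinuousMap.smul_apply, ContinuousMap.one_apply, smul_eq_mul, mul_one]
    · simp
  -- membership
  refine ⟨N, fun i => A i, fun i => pf i, fun i => ?_, fun i => ?_, ?_⟩
  · rw [hA]; exact posSemidef_Efun _
  · intro t
    rw [hpf]
    simp only [ContinuousMap.coe_mk]
    refine add_nonneg (mul_nonneg ?_ ?_) ?_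
    · exact Complex.zero_le_real.mpr hc1
    · exact star_mul_self_nonneg (S i t)
    · exact Complex.zero_le_real.mpr hc2
  · ext p q t
    rw [Matrix.sum_apply, ContinuousMap.sum_apply]
    have hterm : ∀ i : Fin N, (eTensor (A (i:ℕ)) (pf (i:ℕ))) p q t = A (i:ℕ) p q * pf (i:ℕ) t := by
      intro i
      simp [eTensor, smul_eq_mul]
    rw [Finset.sum_congr rfl fun i _ => hterm i,
      Fin.sum_univ_eq_sum_range (fun k => A k p q * pf k t) N]
    rw [hLHS p q t]
    fin_cases p <;> fin_cases q <;> simp only [Fin.zero_eta, Fin.mk_one, Fin.isValue]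
    · -- (0,0)
      have hA00 : ∀ k, A k 0 0 = 1 := fun k => by rw [hA]; simp
      rw [Finset.sum_congr rfl fun k _ => by rw [hA00 k, one_mul]]
      rw [hp_sum t]
      simp [hP00]
      ring
    · -- (0,1)
      have hA01 : ∀ k, A k 0 1 = Efun ((k:ℝ)/N) := fun k => by rw [hA]; simp
      rw [Finset.sum_congr rfl fun k _ => by rw [hA01 k]]
      rw [hpz_sum t]
      simp [hP01 t]
    · -- (1,0)
      have hA10 : ∀ k, A k 1 0 = Efun (-((k:ℝ)/N)) := fun k => by rw [hA]; simp
      rw [Finset.sum_congr rfl fun k _ => by rw [hA10 k]]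
      rw [hpzc_sum t]
      simp [hP10 t]
    · -- (1,1)
      have hA11 : ∀ k, A k 1 1 = 1 := fun k => by rw [hA]; simp
      rw [Finset.sum_congr rfl fun k _ => by rw [hA11 k, one_mul]]
      rw [hp_sum t]
      simp [hP11]
      ring

lemma elim3 {z0 z1 z2 x y u : ℂ} (h01 : z0 ≠ z1) (h02 : z0 ≠ z2) (h12 : z1 ≠ z2)
    (e0 : x + y * z0^2 = u * z0) (e1 : x + y * z1^2 = u * z1)
    (e2 : x + y * z2^2 = u * z2) : x = 0 ∧ y = 0 ∧ u = 0 := by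
  have d01 : (z0 - z1) * (y * (z0 + z1) - u) = 0 := by linear_combination e0 - e1
  have d02 : (z0 - z2) * (y * (z0 + z2) - u) = 0 := by linear_combination e0 - e2
  have g1 : y * (z0 + z1) = u := by
    rcases mul_eq_zero.mp d01 with h | h
    · exact absurd (sub_eq_zero.mp h) h01
    · exact sub_eq_zero.mp h
  have g2 : y * (z0 + z2) = u := by
    rcases mul_eq_zero.mp d02 with h | h
    · exact absurd (sub_eq_zero.mp h) h02
    · exact sub_eq_zero.mp h
  have hy : y = 0 := by
    have h3 : y * (z1 - z2) = 0 := by linear_combination g1 - g2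
    rcases mul_eq_zero.mp h3 with h | h
    · exact h
    · exact absurd (sub_eq_zero.mp h) h12
  have hu : u = 0 := by linear_combination (z0 + z1) * hy - g1
  exact ⟨by linear_combination e0 - z0^2 * hy + z0 * hu, hy, hu⟩

lemma Pmat_not_mem_Dmax : Pmat ∉ Dmax posC01 2 := by
  rintro ⟨k, a, v, hpsd, hpos, hsum⟩
  have hent : ∀ (p q : Fin 2) (t : Set.Icc (0:ℝ) 1),
      Pmat p q t = ∑ i, a i p q * v i t := by
    intro p q t
    rw [hsum]
    rw [Matrix.sum_apply]
    rw [ContinuousMap.sum_apply]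
    exact Finset.sum_congr rfl fun i _ => by
      simp [eTensor, smul_eq_mul]
  have hP00 : Pmat 0 0 = (1 : C(Set.Icc (0:ℝ) 1, ℂ)) := by simp [Pmat]
  have hP11 : Pmat 1 1 = (1 : C(Set.Icc (0:ℝ) 1, ℂ)) := by simp [Pmat]
  have hP01 : ∀ t : Set.Icc (0:ℝ) 1, Pmat 0 1 t = Efun t := by
    intro t; simp [Pmat, expMap, Efun]
  have hP10 : ∀ t : Set.Icc (0:ℝ) 1, Pmat 1 0 t = Efun (-(t:ℝ)) := by
    intro t
    simp only [Pmat]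
    rw [show (!![1, expMap; star expMap, 1] : Matrix (Fin 2) (Fin 2) _) 1 0 = star expMap by simp]
    rw [ContinuousMap.star_apply]
    rw [show star (expMap t) = (starRingEnd ℂ) (expMap t) from rfl]
    rw [show expMap t = Efun t from rfl, conj_Efun]
  -- the positive functional
  have hφnn : ∀ (s : ℝ) (A : Matrix (Fin 2) (Fin 2) ℂ), A.PosSemidef →
      0 ≤ A 0 0 + A 1 1 - Efun (-s) * A 0 1 - Efun s * A 1 0 := by
    intro s A hA
    have h := (Matrix.posSemidef_iff_dotProduct_mulVec.mp hA).2 ![1, -Efun (-s)]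
    have heq : dotProduct (star ![1, -Efun (-s)]) (A.mulVec ![1, -Efun (-s)])
        = A 0 0 + A 1 1 - Efun (-s) * A 0 1 - Efun s * A 1 0 := by
      simp only [dotProduct, Matrix.mulVec, Fin.sum_univ_two, Pi.star_apply,
        Matrix.cons_val_zero, Matrix.cons_val_one, Matrix.head_cons, star_one, star_neg,
        Complex.star_def, conj_Efun, neg_neg, map_one, map_neg]
      linear_combination (A 1 1) * Efun_mul_neg s
    rwa [heq] at h
  have hkey : ∀ (t : Set.Icc (0:ℝ) 1) (i : Fin k),
      v i t * (a i 0 0 + a i 1 1 - Efun (-(t:ℝ)) * a i 0 1 - Efun (t:ℝ) * a i 1 0) = 0 := by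
    intro t
    have expand : ∑ i, v i t * (a i 0 0 + a i 1 1 - Efun (-(t:ℝ)) * a i 0 1 - Efun (t:ℝ) * a i 1 0)
        = (∑ i, a i 0 0 * v i t) + (∑ i, a i 1 1 * v i t)
          - Efun (-(t:ℝ)) * (∑ i, a i 0 1 * v i t) - Efun (t:ℝ) * (∑ i, a i 1 0 * v i t) := by
      rw [Finset.mul_sum, Finset.mul_sum, ← Finset.sum_add_distrib, ← Finset.sum_sub_distrib,
        ← Finset.sum_sub_distrib]
      exact Finset.sum_congr rfl fun i _ => by ring
    have hsum0 : ∑ i, v i t * (a i 0 0 + a i 1 1 - Efun (-(t:ℝ)) * a i 0 1 - Efun (t:ℝ) * a i 1 0) = 0 := by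
      rw [expand, ← hent 0 0 t, ← hent 1 1 t, ← hent 0 1 t, ← hent 1 0 t,
        hP00, hP11, hP01 t, hP10 t, ContinuousMap.one_apply]
      have h1 := Efun_mul_neg (t:ℝ)
      linear_combination (-1 - 1 : ℂ) * h1 + h1 * 0
    have hnn : ∀ i ∈ Finset.univ (α := Fin k),
        0 ≤ v i t * (a i 0 0 + a i 1 1 - Efun (-(t:ℝ)) * a i 0 1 - Efun (t:ℝ) * a i 1 0) :=
      fun i _ => mul_nonneg (hpos i t) (hφnn (t:ℝ) (a i) (hpsd i))
    intro i
    exact (Finset.sum_eq_zero_iff_of_nonneg hnn).mp hsum0 i (Finset.mem_univ i)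
  -- every term vanishes
  have hterm : ∀ i, eTensor (a i) (v i) = 0 := by
    intro i
    by_cases hv : ∀ t, v i t = 0
    · ext p q t
      simp [eTensor, hv t]
    · push_neg at hv
      obtain ⟨t0, ht0⟩ := hv
      have hc : ∀ᶠ s in nhds t0, v i s ≠ 0 :=
        ((v i).continuous.continuousAt).eventually_ne ht0
      obtain ⟨ε, hε, hball⟩ := Metric.eventually_nhds_iff.mp hc
      set η : ℝ := min ε (1/2) / 4 with hη
      have hηpos : 0 < η := by positivity
      have hηε : 3 * η < ε := by
        have : min ε (1/2) ≤ ε := min_le_left _ _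
        have h2 : 0 < min ε (1/2) := lt_min hε (by norm_num)
        calc 3 * η = 3/4 * min ε (1/2) := by rw [hη]; ring
        _ < min ε (1/2) := by linarith
        _ ≤ ε := this
      have hη2 : η ≤ 1/8 := by
        have : min ε (1/2) ≤ 1/2 := min_le_right _ _
        rw [hη]; linarith
      set σ : ℝ := if (t0:ℝ) ≤ 1/2 then 1 else -1 with hσ
      set s : ℕ → ℝ := fun j => (t0:ℝ) + σ * (η * (j+1)) with hs
      have hmem : ∀ j : ℕ, j ≤ 2 → s j ∈ Set.Icc (0:ℝ) 1 := by
        intro j hj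
        have ht0m := t0.2
        simp only [Set.mem_Icc] at ht0m ⊢
        have hb : η * (j+1) ≤ 3 * η := by
          have : (j:ℝ) + 1 ≤ 3 := by exact_mod_cast by omega
          nlinarith
        rw [hs]
        by_cases hc2 : (t0:ℝ) ≤ 1/2
        · rw [hσ]; simp only [hc2, if_pos]
          constructor <;> nlinarith [ht0m.1, ht0m.2]
        · rw [hσ]; simp only [hc2, if_neg, not_false_iff]
          push_neg at hc2
          constructor <;> nlinarith [ht0m.1, ht0m.2]
      have hdist : ∀ j : ℕ, j ≤ 2 → |s j - (t0:ℝ)| < ε := by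
        intro j hj
        rw [hs]
        have hσ1 : |σ| = 1 := by rw [hσ]; split <;> simp
        have : |(t0:ℝ) + σ * (η * (j+1)) - t0| = |σ| * (η * (j+1)) := by
          rw [show (t0:ℝ) + σ * (η * (j+1)) - t0 = σ * (η * (j+1)) by ring, abs_mul,
            abs_of_nonneg (by positivity : (0:ℝ) ≤ η * (j+1))]
        rw [this, hσ1, one_mul]
        have : (j:ℝ) + 1 ≤ 3 := by exact_mod_cast by omega
        nlinarith
      have hvne : ∀ j : ℕ, (hj : j ≤ 2) → v i ⟨s j, hmem j hj⟩ ≠ 0 := by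
        intro j hj
        apply hball
        rw [Subtype.dist_eq, Real.dist_eq]
        exact hdist j hj
      have hφ0 : ∀ j : ℕ, (hj : j ≤ 2) →
          a i 0 0 + a i 1 1 - Efun (-(s j)) * a i 0 1 - Efun (s j) * a i 1 0 = 0 := by
        intro j hj
        have := hkey ⟨s j, hmem j hj⟩ i
        simp only at this
        rcases mul_eq_zero.mp this with h | h
        · exact absurd h (hvne j hj)
        · exact h
      -- convert to polynomial system
      have hpoly : ∀ j : ℕ, (hj : j ≤ 2) →
          a i 0 1 + a i 1 0 * (Efun (s j))^2 = (a i 0 0 + a i 1 1) * Efun (s j) := by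
        intro j hj
        have h := hφ0 j hj
        have hzz : Efun (s j) * Efun (-(s j)) = 1 := Efun_mul_neg (s j)
        linear_combination (-(Efun (s j))) * h + (-(a i 0 1)) * hzz
      have hsne : ∀ j l : ℕ, j ≤ 2 → l ≤ 2 → j ≠ l → Efun (s j) ≠ Efun (s l) := by
        intro j l hj hl hjl
        apply Efun_inj
        · intro h
          apply hjl
          rw [hs] at h
          simp only at h
          have hσ0 : σ ≠ 0 := by rw [hσ]; split <;> norm_num
          have h2 : σ * (η * ((j:ℝ) - l)) = 0 := by linear_combination h
          have h3 : (j:ℝ) - l = 0 := by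
            rcases mul_eq_zero.mp h2 with h' | h'
            · exact absurd h' hσ0
            · rcases mul_eq_zero.mp h' with h'' | h''
              · exact absurd h'' (ne_of_gt hηpos)
              · exact h''
          have : (j:ℝ) = l := by linarith
          exact_mod_cast this
        · rw [hs]
          have : (t0:ℝ) + σ * (η * (j+1)) - ((t0:ℝ) + σ * (η * (l+1))) = σ * η * ((j:ℝ) - l) := by ring
          rw [this, abs_mul, abs_mul]
          have hσ1 : |σ| = 1 := by rw [hσ]; split <;> simp
          have hjl' : |(j:ℝ) - l| ≤ 2 := by
            rw [abs_le]; constructor <;> [skip; skip] <;>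
            · have hj' : (j:ℝ) ≤ 2 := by exact_mod_cast hj
              have hl' : (l:ℝ) ≤ 2 := by exact_mod_cast hl
              have : (0:ℝ) ≤ j := Nat.cast_nonneg j
              have : (0:ℝ) ≤ l := Nat.cast_nonneg l
              linarith
          rw [hσ1, one_mul, abs_of_nonneg hηpos.le]
          nlinarith
      obtain ⟨hx, hy, hu⟩ := elim3 (hsne 0 1 (by norm_num) (by norm_num) (by norm_num))
        (hsne 0 2 (by norm_num) (by norm_num) (by norm_num))
        (hsne 1 2 (by norm_num) (by norm_num) (by norm_num))
        (hpoly 0 (by norm_num)) (hpoly 1 (by norm_num)) (hpoly 2 (by norm_num))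
      -- diagonal entries nonneg
      have h00 : 0 ≤ a i 0 0 := by
        have h := (Matrix.posSemidef_iff_dotProduct_mulVec.mp (hpsd i)).2 ![1, 0]
        have heq : dotProduct (star ![(1:ℂ), 0]) ((a i).mulVec ![1, 0]) = a i 0 0 := by
          simp [dotProduct, Matrix.mulVec, Fin.sum_univ_two]
        rwa [heq] at h
      have h11 : 0 ≤ a i 1 1 := by
        have h := (Matrix.posSemidef_iff_dotProduct_mulVec.mp (hpsd i)).2 ![0, 1]
        have heq : dotProduct (star ![(0:ℂ), 1]) ((a i).mulVec ![0, 1]) = a i 1 1 := by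
          simp [dotProduct, Matrix.mulVec, Fin.sum_univ_two]
        rwa [heq] at h
      have h00z : a i 0 0 = 0 := by
        have : a i 0 0 ≤ 0 := by
          have : a i 0 0 = -(a i 1 1) := by linear_combination hu
          rw [this]; exact neg_nonpos.mpr h11
        exact le_antisymm this h00
      have h11z : a i 1 1 = 0 := by linear_combination hu - h00z
      have haz : a i = 0 := by
        ext p q
        fin_cases p <;> fin_cases q <;> simp [h00z, h11z, hx, hy]
      rw [haz]
      ext p q t
      simp [eTensor]
  rw [Finset.sum_congr rfl (fun i _ => hterm i), Finset.sum_const_zero] at hsum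
  have h1 : (1 : C(Set.Icc (0:ℝ) 1, ℂ)) ⟨0, by norm_num⟩
      = ((0 : Matrix (Fin 2) (Fin 2) C(Set.Icc (0:ℝ) 1, ℂ)) 0 0) ⟨0, by norm_num⟩ := by
    rw [← hP00, hsum]
  simp only [ContinuousMap.one_apply, Matrix.zero_apply, ContinuousMap.zero_apply] at h1
  exact one_ne_zero h1

end Helpers

/-- `r e_2 + P ∈ D_2^max(C([0,1]))` for every `r > 0`; consequently
the unit is not an Archimedean matrix order unit for `D^max(C([0,1]))`. -/
theorem smul_unit_add_Pmat_mem_Dmax_and_not_arch :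
    (∀ r : ℝ, 0 < r →
      (r : ℂ) • eMat (1 : C(Set.Icc (0:ℝ) 1, ℂ)) 2 + Pmat ∈ Dmax posC01 2) ∧
    ¬ (∀ M : Matrix (Fin 2) (Fin 2) C(Set.Icc (0:ℝ) 1, ℂ),
        (∀ r : ℝ, 0 < r → (r : ℂ) • eMat (1 : C(Set.Icc (0:ℝ) 1, ℂ)) 2 + M ∈ Dmax posC01 2) →
        M ∈ Dmax posC01 2) :=
  ⟨fun r hr => part1 r hr,
   fun h => Pmat_not_mem_Dmax (h Pmat (fun r hr => part1 r hr))⟩
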